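/- Let ρ be the largest root of x^3 - a x^2 - (a+3)x - 1 with a ≥ 7. If ε = ρ^k (ρ')^l is a unit in Z[ρ] (with k, l ∈ Z, ρ' the second root) such that all three conjugates of ε have absolute value less than a, then ε = 1. -/
import Mathlib

lemma abs_zpow' (x : ℝ) (n : ℤ) : |x ^ n| = |x| ^ n := by
  rcases n with n | n
  · simp [abs_pow]
  · simp [zpow_negSucc, abs_inv, abs_pow]

set_option maxHeartbeats 1000000 in
theorem simplest_cubic_small_unit (a : ℤ) (ha : 7 ≤ a) (ρ ρ' ρ'' : ℝ)
    (hρ : ρ^3 - a*ρ^2 - (a+3)*ρ - 1 = 0)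
    (hρ' : ρ'^3 - a*ρ'^2 - (a+3)*ρ' - 1 = 0)
    (hρ'' : ρ''^3 - a*ρ''^2 - (a+3)*ρ'' - 1 = 0)
    (hb1 : (a:ℝ) + 1 < ρ) (hb2 : -2 < ρ' ∧ ρ' < -1) (hb3 : -1 < ρ'' ∧ ρ'' < 0)
    (k l : ℤ)
    (hε : |ρ ^ k * ρ' ^ l| < a)
    (hε' : |ρ' ^ k * ρ'' ^ l| < a)
    (hε'' : |ρ'' ^ k * ρ ^ l| < a) :
    ρ ^ k * ρ' ^ l = 1 := by
  obtain ⟨hb2a, hb2b⟩ := hb2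
  obtain ⟨hb3a, hb3b⟩ := hb3
  have ha' : (7:ℝ) ≤ (a:ℝ) := by exact_mod_cast ha
  have hρpos : (0:ℝ) < ρ := by linarith
  have hρa : (a:ℝ) < ρ := by linarith
  have hρ1 : (1:ℝ) < ρ := by linarith
  -- Vieta style identities
  have e1 : ρ^2 + ρ*ρ' + ρ'^2 - a*(ρ+ρ') - (a+3) = 0 := by
    have h : (ρ - ρ') * (ρ^2 + ρ*ρ' + ρ'^2 - a*(ρ+ρ') - (a+3)) = 0 := by
      linear_combination hρ - hρ'
    rcases mul_eq_zero.mp h with h | h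
    · exfalso; linarith
    · exact h
  have e2 : ρ^2 + ρ*ρ'' + ρ''^2 - a*(ρ+ρ'') - (a+3) = 0 := by
    have h : (ρ - ρ'') * (ρ^2 + ρ*ρ'' + ρ''^2 - a*(ρ+ρ'') - (a+3)) = 0 := by
      linear_combination hρ - hρ''
    rcases mul_eq_zero.mp h with h | h
    · exfalso; linarith
    · exact h
  have esum : ρ + ρ' + ρ'' = a := by
    have h : (ρ' - ρ'') * (ρ + ρ' + ρ'' - a) = 0 := by
      linear_combination e1 - e2
    rcases mul_eq_zero.mp h with h | h
    · exfalso; linarith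
    · linarith
  have e2sym : ρ*ρ' + ρ*ρ'' + ρ'*ρ'' = -(a+3) := by
    linear_combination -e1 + (ρ+ρ')*esum
  have eprod : ρ * ρ' * ρ'' = 1 := by
    linear_combination hρ - ρ^2 * esum + ρ * e2sym
  set q : ℝ := -ρ' with hqdef
  set r : ℝ := -ρ'' with hrdef
  have hq1 : (1:ℝ) < q := by rw [hqdef]; linarith
  have hq0 : (0:ℝ) < q := by linarith
  have hr0 : (0:ℝ) < r := by rw [hrdef]; linarith
  have hρ'neg : ρ' < 0 := by linarith
  have hρ''neg : ρ'' < 0 := by linarith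
  have hqr : ρ * q * r = 1 := by rw [hqdef, hrdef]; linear_combination eprod
  have hs : (a:ℝ) < ρ * q := by nlinarith
  have hs1 : (1:ℝ) < ρ * q := by nlinarith
  have hrinv : r⁻¹ = ρ * q := inv_eq_of_mul_eq_one_right (by linear_combination hqr)
  -- rewrite the hypotheses with positive bases
  rw [abs_mul, abs_zpow', abs_zpow', abs_of_pos hρpos, abs_of_neg hρ'neg, ← hqdef] at hε
  rw [abs_mul, abs_zpow', abs_zpow', abs_of_neg hρ'neg, abs_of_neg hρ''neg, ← hqdef, ← hrdef] at hε'
  rw [abs_mul, abs_zpow', abs_zpow', abs_of_neg hρ''neg, abs_of_pos hρpos, ← hrdef] at hε''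
  clear hρ hρ' hρ'' e1 e2 esum e2sym eprod hqr hb1 hb2a hb2b hb3a hb3b hqdef hrdef ha
  -- now hε : ρ^k * q^l < a, hε' : q^k * r^l < a, hε'' : r^k * ρ^l < a
  have hmain : ¬ (k ≠ 0 ∨ l ≠ 0) := by
    intro hor
    rcases lt_trichotomy k 0 with hk | hk | hk
    -- k < 0
    · obtain ⟨m, hm0, hkm⟩ : ∃ m : ℕ, 0 < m ∧ k = -(m:ℤ) :=
        ⟨(-k).toNat, by omega, by omega⟩
      have hrk : r ^ k = (ρ*q)^m := by
        rw [hkm, zpow_neg, zpow_natCast, ← inv_pow, hrinv]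
      have hqk : q ^ k = (q^m)⁻¹ := by rw [hkm, zpow_neg, zpow_natCast]
      rcases le_or_gt l 0 with hl | hl
      · obtain ⟨n, hln⟩ : ∃ n : ℕ, l = -(n:ℤ) := ⟨(-l).toNat, by omega⟩
        have hrl : r ^ l = (ρ*q)^n := by
          rw [hln, zpow_neg, zpow_natCast, ← inv_pow, hrinv]
        have hρl : ρ ^ l = (ρ^n)⁻¹ := by rw [hln, zpow_neg, zpow_natCast]
        rcases le_or_gt m n with hmn | hmn
        · -- use hε' : (q^m)⁻¹ * (ρ*q)^n is large
          have key : (a:ℝ) < q ^ k * r ^ l := by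
            rw [hqk, hrl, inv_mul_eq_div, lt_div_iff₀ (pow_pos hq0 m), mul_pow]
            have h1 : q ^ m ≤ q ^ n := pow_le_pow_right₀ hq1.le hmn
            have h2 : ρ ≤ ρ ^ n := le_self_pow₀ hρ1.le (by omega)
            nlinarith [pow_pos hq0 m, pow_pos hq0 n, pow_pos hρpos n]
          linarith
        · -- use hε'' : (ρ*q)^m * (ρ^n)⁻¹ is large
          have key : (a:ℝ) < r ^ k * ρ ^ l := by
            rw [hrk, hρl, mul_comm, inv_mul_eq_div, lt_div_iff₀ (pow_pos hρpos n), mul_pow]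
            have hsplit : ρ ^ m = ρ ^ n * ρ ^ (m - n) := by
              rw [← pow_add]; congr 1; omega
            have h2 : ρ ≤ ρ ^ (m - n) := le_self_pow₀ hρ1.le (by omega)
            have h3 : (1:ℝ) ≤ q ^ m := one_le_pow₀ hq1.le
            nlinarith [pow_pos hρpos n, pow_pos hρpos m, pow_pos hq0 m]
          linarith
      · -- l > 0 : use hε'' : (ρ*q)^m * ρ^n is large
        obtain ⟨n, hn0, hln⟩ : ∃ n : ℕ, 0 < n ∧ l = (n:ℤ) := ⟨l.toNat, by omega, by omega⟩
        have hρl : ρ ^ l = ρ ^ n := by rw [hln, zpow_natCast]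
        have key : (a:ℝ) < r ^ k * ρ ^ l := by
          rw [hrk, hρl]
          have h1 : ρ * q ≤ (ρ*q)^m := le_self_pow₀ hs1.le (by omega)
          have h2 : ρ ≤ ρ ^ n := le_self_pow₀ hρ1.le (by omega)
          nlinarith [pow_pos (mul_pos hρpos hq0) m, pow_pos hρpos n]
        linarith
    -- k = 0 : handle via l
    · subst hk
      have hl' : l ≠ 0 := by omega
      rcases lt_trichotomy l 0 with hl | hl | hl
      · -- use hε' : q^0 * r^l large
        obtain ⟨n, hn0, hln⟩ : ∃ n : ℕ, 0 < n ∧ l = -(n:ℤ) := ⟨(-l).toNat, by omega, by omega⟩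
        have hrl : r ^ l = (ρ*q)^n := by
          rw [hln, zpow_neg, zpow_natCast, ← inv_pow, hrinv]
        have key : (a:ℝ) < q ^ (0:ℤ) * r ^ l := by
          rw [hrl, zpow_zero, one_mul]
          have h1 : ρ * q ≤ (ρ*q)^n := le_self_pow₀ hs1.le (by omega)
          exact lt_of_lt_of_le hs h1
        linarith
      · exact hl' hl
      · -- use hε'' : r^0 * ρ^l large
        obtain ⟨n, hn0, hln⟩ : ∃ n : ℕ, 0 < n ∧ l = (n:ℤ) := ⟨l.toNat, by omega, by omega⟩
        have key : (a:ℝ) < r ^ (0:ℤ) * ρ ^ l := by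
          rw [hln, zpow_natCast, zpow_zero, one_mul]
          have h2 : ρ ≤ ρ ^ n := le_self_pow₀ hρ1.le (by omega)
          linarith
        linarith
    -- k > 0
    · obtain ⟨m, hm0, hkm⟩ : ∃ m : ℕ, 0 < m ∧ k = (m:ℤ) := ⟨k.toNat, by omega, by omega⟩
      rcases le_or_gt 0 l with hl | hl
      · -- use hε : ρ^m * q^n large
        obtain ⟨n, hln⟩ : ∃ n : ℕ, l = (n:ℤ) := ⟨l.toNat, by omega⟩
        have key : (a:ℝ) < ρ ^ k * q ^ l := by
          rw [hkm, hln, zpow_natCast, zpow_natCast]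
          have h1 : ρ ≤ ρ ^ m := le_self_pow₀ hρ1.le (by omega)
          have h2 : (1:ℝ) ≤ q ^ n := one_le_pow₀ hq1.le
          nlinarith [pow_pos hρpos m, pow_pos hq0 n]
        linarith
      · -- l < 0 : use hε' : q^m * (ρq)^n large
        obtain ⟨n, hn0, hln⟩ : ∃ n : ℕ, 0 < n ∧ l = -(n:ℤ) := ⟨(-l).toNat, by omega, by omega⟩
        have hrl : r ^ l = (ρ*q)^n := by
          rw [hln, zpow_neg, zpow_natCast, ← inv_pow, hrinv]
        have key : (a:ℝ) < q ^ k * r ^ l := by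
          rw [hrl, hkm, zpow_natCast]
          have h1 : ρ * q ≤ (ρ*q)^n := le_self_pow₀ hs1.le (by omega)
          have h2 : (1:ℝ) ≤ q ^ m := one_le_pow₀ hq1.le
          nlinarith [pow_pos (mul_pos hρpos hq0) n, pow_pos hq0 m]
        linarith
  push_neg at hmain
  obtain ⟨rfl, rfl⟩ := hmain
  simp
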